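/- Let (S, ρ) be a measure space and (E, ν) a measure space, A a finite type, φ : E → A measurable (A carrying the discrete σ-algebra), Q : S → A → ℝ, θ₀ ∈ ℝ, and μ : ℝ → S → E → ℝ. Assume: (i) (s,e) ↦ μ θ s e · Q s (φ e) is integrable with respect to the product measure ρ × ν for every θ in some neighborhood of θ₀; (ii) for (ρ × ν)-almost every (s,e), the map θ ↦ μ θ s e is differentiable on that neighborhood with μ θ₀ s e > 0; (iii) there is a (ρ × ν)-integrable function h : S × E → ℝ dominating |(d/dθ) μ θ s e · Q s (φ e)| on that neighborhood for almost every (s,e). Then θ ↦ ∫_S ∫_E μ θ s e · Q s (φ e) dν(e) dρ(s) has derivative at θ₀ equal to ∫_S ∫_E μ θ₀ s e · (d/dθ)|_{θ₀} log(μ θ s e) · Q s (φ e) dν(e) dρ(s). -/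

import Mathlib

set_option maxHeartbeats 1000000
open MeasureTheory Filter

/-- Lemma 1 (full form): with states `s ∼ ρ`, proto-action density `μ θ s e`, a deterministic
mapping `φ` from proto-actions to a finite action set, and value function `Q`, under a
dominated-derivative hypothesis the derivative at `θ₀` of
`θ ↦ ∫ₛ ∫ₑ μ θ s e · Q s (φ e) dν dρ` equals
`∫ₛ ∫ₑ μ θ₀ s e · ∂_θ|_{θ₀} log (μ θ s e) · Q s (φ e) dν dρ`. -/
theorem policy_gradient_full
    {S : Type*} [MeasurableSpace S] (ρ : Measure S) [SigmaFinite ρ]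
    {E : Type*} [MeasurableSpace E] (ν : Measure E) [SigmaFinite ν]
    {A : Type*} [Fintype A] [MeasurableSpace A] (hA : ‹MeasurableSpace A› = ⊤)
    (φ : E → A) (hφ : Measurable φ)
    (Q : S → A → ℝ) (θ₀ : ℝ) (μ : ℝ → S → E → ℝ)
    (U : Set ℝ) (hU : U ∈ nhds θ₀)
    (hInt : ∀ θ ∈ U,
      Integrable (fun p : S × E => μ θ p.1 p.2 * Q p.1 (φ p.2)) (ρ.prod ν))
    (hDiff : ∀ᵐ p : S × E ∂ρ.prod ν,
      (∀ θ ∈ U, DifferentiableAt ℝ (fun θ' => μ θ' p.1 p.2) θ) ∧ 0 < μ θ₀ p.1 p.2)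
    (h : S × E → ℝ) (hInt_h : Integrable h (ρ.prod ν))
    (hDom : ∀ᵐ p : S × E ∂ρ.prod ν, ∀ θ ∈ U,
      |deriv (fun θ' => μ θ' p.1 p.2) θ * Q p.1 (φ p.2)| ≤ h p) :
    HasDerivAt (fun θ => ∫ s, ∫ e, μ θ s e * Q s (φ e) ∂ν ∂ρ)
      (∫ s, ∫ e,
        μ θ₀ s e * deriv (fun θ => Real.log (μ θ s e)) θ₀ * Q s (φ e) ∂ν ∂ρ) θ₀ := by
  classical
  obtain ⟨ε, εpos, hball⟩ := Metric.mem_nhds_iff.mp hU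
  have hθ₀U : θ₀ ∈ U := mem_of_mem_nhds hU
  set F : ℝ → S × E → ℝ := fun θ p => μ θ p.1 p.2 * Q p.1 (φ p.2) with hFdef
  set F' : ℝ → S × E → ℝ :=
    fun θ p => deriv (fun θ' => μ θ' p.1 p.2) θ * Q p.1 (φ p.2) with hF'def
  -- a.e. derivative on the ball
  have hderiv : ∀ᵐ p : S × E ∂ρ.prod ν, ∀ θ ∈ Metric.ball θ₀ ε,
      HasDerivAt (fun θ' => F θ' p) (F' θ p) θ := by
    filter_upwards [hDiff] with p hp θ hθ
    exact ((hp.1 θ (hball hθ)).hasDerivAt).mul_const _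
  have hderiv0 : ∀ᵐ p ∂ρ.prod ν, HasDerivAt (fun θ' => F θ' p) (F' θ₀ p) θ₀ := by
    filter_upwards [hderiv] with p hp
    exact hp θ₀ (Metric.mem_ball_self εpos)
  -- measurability of F' θ₀ via difference quotients
  set seq : ℕ → ℝ := fun n => θ₀ + ε / (2 * ((n : ℝ) + 1)) with hseqdef
  have hδpos : ∀ n : ℕ, 0 < ε / (2 * ((n : ℝ) + 1)) := fun n => by positivity
  have hseq_ne : ∀ n, seq n ≠ θ₀ := fun n => by
    have := hδpos n; simp only [hseqdef]; intro hc; nlinarith [hc]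
  have hseqU : ∀ n, seq n ∈ U := by
    intro n
    apply hball
    simp only [Metric.mem_ball, hseqdef, Real.dist_eq, add_sub_cancel_left,
      abs_of_pos (hδpos n)]
    rw [div_lt_iff₀ (by positivity : (0:ℝ) < 2 * ((n : ℝ) + 1))]
    nlinarith [εpos, Nat.cast_nonneg (α := ℝ) n]
  have hseq_tend : Tendsto seq atTop (nhdsWithin θ₀ {θ₀}ᶜ) := by
    apply tendsto_nhdsWithin_of_tendsto_nhds_of_eventually_within
    · have h1 : Tendsto (fun n : ℕ => ε / (2 * ((n : ℝ) + 1))) atTop (nhds 0) := by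
        apply Tendsto.div_atTop tendsto_const_nhds
        apply Tendsto.const_mul_atTop (by norm_num : (0:ℝ) < 2)
        exact tendsto_natCast_atTop_atTop.atTop_add tendsto_const_nhds
      have := h1.const_add θ₀
      simpa using this
    · exact Eventually.of_forall fun n => hseq_ne n
  have hF'meas : AEStronglyMeasurable (F' θ₀) (ρ.prod ν) := by
    apply aestronglyMeasurable_of_tendsto_ae atTop
      (f := fun n p => (seq n - θ₀)⁻¹ * (F (seq n) p - F θ₀ p))
    · intro n
      exact (((hInt (seq n) (hseqU n)).sub (hInt θ₀ hθ₀U)).aestronglyMeasurable).const_mul _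
    · filter_upwards [hderiv0] with p hp
      have htend := (hasDerivAt_iff_tendsto_slope.mp hp).comp hseq_tend
      have heqfun : (fun n => (seq n - θ₀)⁻¹ * (F (seq n) p - F θ₀ p))
          = (slope (fun θ => F θ p) θ₀) ∘ seq := by
        funext n
        simp [slope_def_field, div_eq_inv_mul, Function.comp]
      rw [heqfun]
      exact htend
  -- domination
  have hbound : ∀ᵐ p ∂ρ.prod ν, ∀ θ ∈ Metric.ball θ₀ ε, ‖F' θ p‖ ≤ h p := by
    filter_upwards [hDom] with p hp θ hθ
    rw [Real.norm_eq_abs]; exact hp θ (hball hθ)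
  have hFmeas : ∀ᶠ θ in nhds θ₀, AEStronglyMeasurable (F θ) (ρ.prod ν) := by
    filter_upwards [hU] with θ hθ
    exact (hInt θ hθ).aestronglyMeasurable
  have key := hasDerivAt_integral_of_dominated_loc_of_deriv_le (Metric.ball_mem_nhds θ₀ εpos) hFmeas
    (hInt θ₀ hθ₀U) hF'meas hbound hInt_h hderiv
  obtain ⟨hF'int, hkey⟩ := key
  -- rewrite target value
  have haeeq : ∀ᵐ p : S × E ∂ρ.prod ν,
      μ θ₀ p.1 p.2 * deriv (fun θ => Real.log (μ θ p.1 p.2)) θ₀ * Q p.1 (φ p.2)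
        = F' θ₀ p := by
    filter_upwards [hDiff] with p hp
    have hpos := hp.2
    have hne : μ θ₀ p.1 p.2 ≠ 0 := ne_of_gt hpos
    have hdμ : HasDerivAt (fun θ' => μ θ' p.1 p.2)
        (deriv (fun θ' => μ θ' p.1 p.2) θ₀) θ₀ := (hp.1 θ₀ hθ₀U).hasDerivAt
    have hlog : HasDerivAt (fun θ => Real.log (μ θ p.1 p.2))
        ((μ θ₀ p.1 p.2)⁻¹ * deriv (fun θ' => μ θ' p.1 p.2) θ₀) θ₀ :=
      by have := (Real.hasDerivAt_log hne).comp θ₀ hdμ; exact this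
    rw [hlog.deriv]
    simp only [hF'def]
    field_simp
  have hval : (∫ s, ∫ e,
      μ θ₀ s e * deriv (fun θ => Real.log (μ θ s e)) θ₀ * Q s (φ e) ∂ν ∂ρ)
      = ∫ p, F' θ₀ p ∂(ρ.prod ν) := by
    rw [MeasureTheory.integral_prod _ hF'int]
    refine integral_congr_ae ?_
    filter_upwards [Measure.ae_ae_of_ae_prod haeeq] with s hs
    exact integral_congr_ae hs
  rw [hval]
  -- rewrite the function eventually
  have heq : (fun θ => ∫ s, ∫ e, μ θ s e * Q s (φ e) ∂ν ∂ρ)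
      =ᶠ[nhds θ₀] fun θ => ∫ p, F θ p ∂(ρ.prod ν) := by
    filter_upwards [hU] with θ hθ
    exact (MeasureTheory.integral_prod _ (hInt θ hθ)).symm
  exact hkey.congr_of_eventuallyEq heq
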